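/- In the setting of the finite-horizon Markov decision process with bounded measurable costs, suppose for each n there is a measurable function a_n*: R^d → A attaining the infimum in the dynamic programming recursion: V_n(x) = f(x, a_n*(x)) + E[ V_{n+1}(F(x, a_n*(x), ε_1)) ] for all x. Then the feedback control α* defined by α*_n = a_n*(X*_n), where X*_{n+1} = F(X*_n, a_n*(X*_n), ε_{n+1}) and X*_0 = x_0, satisfies J(α*) = V_0(x_0); in particular α* is optimal. -/

import Mathlib

open MeasureTheory

/-- Independence plus boundedness gives a Fubini-type identity. -/
lemma indep_integral_eq {Ω Enoise E : Type*} [MeasurableSpace Ω] [MeasurableSpace Enoise]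
    [MeasurableSpace E]
    (μ : Measure Ω) [IsProbabilityMeasure μ] (ν : Measure Enoise) [IsProbabilityMeasure ν]
    (Y : Ω → E) (Z : Ω → Enoise) (hY : Measurable Y) (hZ : Measurable Z)
    (hind : ProbabilityTheory.IndepFun Y Z μ) (hmap : μ.map Z = ν)
    (H : E → Enoise → ℝ) (hH : Measurable fun p : E × Enoise => H p.1 p.2)
    (C : ℝ) (hC : ∀ x e, |H x e| ≤ C) :
    ∫ ω, H (Y ω) (Z ω) ∂μ = ∫ ω, ∫ e, H (Y ω) e ∂ν ∂μ := by
  have hmapY : IsProbabilityMeasure (μ.map Y) := Measure.isProbabilityMeasure_map hY.aemeasurable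
  have hmapprod : μ.map (fun ω => (Y ω, Z ω)) = (μ.map Y).prod ν := by
    rw [← hmap]
    exact (ProbabilityTheory.indepFun_iff_map_prod_eq_prod_map_map hY.aemeasurable
      hZ.aemeasurable).mp hind
  have hint : Integrable (fun p : E × Enoise => H p.1 p.2) ((μ.map Y).prod ν) := by
    refine (integrable_const C).mono' hH.aestronglyMeasurable ?_
    exact Filter.Eventually.of_forall fun p => by simpa using hC p.1 p.2
  calc ∫ ω, H (Y ω) (Z ω) ∂μ
      = ∫ p : E × Enoise, H p.1 p.2 ∂(μ.map (fun ω => (Y ω, Z ω))) := by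
        rw [integral_map (hY.prodMk hZ).aemeasurable hH.aestronglyMeasurable]
    _ = ∫ p : E × Enoise, H p.1 p.2 ∂((μ.map Y).prod ν) := by rw [hmapprod]
    _ = ∫ x, ∫ e, H x e ∂ν ∂(μ.map Y) := integral_prod _ hint
    _ = ∫ ω, ∫ e, H (Y ω) e ∂ν ∂μ := by
        rw [integral_map hY.aemeasurable]
        exact (StronglyMeasurable.integral_prod_right' (f := fun p : E × Enoise => H p.1 p.2)
          hH.stronglyMeasurable).aestronglyMeasurable

/-- The state at time `n` as a measurable function of the first `n` noises. -/
noncomputable def PhiDP {Enoise E A : Type*} (x0 : E) (F : E → A → Enoise → E)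
    (astar : ℕ → E → A) : (n : ℕ) → (Fin n → Enoise) → E
  | 0 => fun _ => x0
  | n + 1 => fun e => F (PhiDP x0 F astar n (fun i => e i.castSucc))
      (astar n (PhiDP x0 F astar n (fun i => e i.castSucc))) (e (Fin.last n))

lemma PhiDP_measurable {Enoise E A : Type*} [MeasurableSpace Enoise] [MeasurableSpace E]
    [MeasurableSpace A] (x0 : E) (F : E → A → Enoise → E) (astar : ℕ → E → A)
    (hF : Measurable fun q : E × A × Enoise => F q.1 q.2.1 q.2.2)
    (ha : ∀ n, Measurable (astar n)) (n : ℕ) :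
    Measurable (PhiDP x0 F astar n) := by
  induction n with
  | zero => exact measurable_const
  | succ n ih =>
    have h1 : Measurable fun e : Fin (n + 1) → Enoise =>
        PhiDP x0 F astar n (fun i => e i.castSucc) :=
      ih.comp (measurable_pi_lambda _ fun i => measurable_pi_apply _)
    exact hF.comp (h1.prodMk (((ha n).comp h1).prodMk (measurable_pi_apply _)))

lemma eps_vec_indep {Ω Enoise : Type*} [MeasurableSpace Ω] [MeasurableSpace Enoise]
    (μ : Measure Ω) (ε : ℕ → Ω → Enoise) (hεmeas : ∀ n, Measurable (ε n))
    (hindep : ProbabilityTheory.iIndepFun ε μ) (n : ℕ) :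
    ProbabilityTheory.IndepFun (fun ω => fun i : Fin n => ε (i + 1) ω) (ε (n + 1)) μ := by
  have hdisj : Disjoint (Finset.Icc 1 n) ({n + 1} : Finset ℕ) := by
    simp [Finset.disjoint_singleton_right, Finset.mem_Icc]
  have h := hindep.indepFun_finset (Finset.Icc 1 n) {n + 1} hdisj hεmeas
  exact h.comp (φ := fun v : (Finset.Icc 1 n : Finset ℕ) → Enoise =>
      fun i : Fin n => v ⟨i + 1, by simp [Finset.mem_Icc]⟩)
    (ψ := fun w : ({n + 1} : Finset ℕ) → Enoise => w ⟨n + 1, Finset.mem_singleton_self _⟩)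
    (measurable_pi_lambda _ fun i => measurable_pi_apply _) (measurable_pi_apply _)

/-- If measurable feedback maps `a_n*` attain the infimum in the DP recursion, then the
associated feedback control achieves the DP value: `J(α*) = V 0 x0`. -/
theorem stmt_3 {Ω Enoise : Type*} [MeasurableSpace Ω] [MeasurableSpace Enoise]
    (μ : Measure Ω) [IsProbabilityMeasure μ]
    (d : ℕ) (A : Type*) [MeasurableSpace A] [TopologicalSpace A] [CompactSpace A] [Nonempty A]
    (ε : ℕ → Ω → Enoise) (hεmeas : ∀ n, Measurable (ε n))
    (ν : Measure Enoise) [IsProbabilityMeasure ν]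
    (hident : ∀ n, μ.map (ε n) = ν)
    (hindep : ProbabilityTheory.iIndepFun ε μ)
    (F : EuclideanSpace ℝ (Fin d) → A → Enoise → EuclideanSpace ℝ (Fin d))
    (hFmeas : Measurable fun q : (EuclideanSpace ℝ (Fin d)) × A × Enoise => F q.1 q.2.1 q.2.2)
    (f : EuclideanSpace ℝ (Fin d) → A → ℝ) (g : EuclideanSpace ℝ (Fin d) → ℝ)
    (hfmeas : Measurable fun q : (EuclideanSpace ℝ (Fin d)) × A => f q.1 q.2)
    (hgmeas : Measurable g)
    (Mf Mg : ℝ) (hfbdd : ∀ x a, |f x a| ≤ Mf) (hgbdd : ∀ x, |g x| ≤ Mg)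
    (N : ℕ) (V : ℕ → EuclideanSpace ℝ (Fin d) → ℝ)
    (hVN : ∀ x, V N x = g x)
    (hV : ∀ n < N, ∀ x, V n x = ⨅ a : A, (f x a + ∫ e, V (n + 1) (F x a e) ∂ν))
    (astar : ℕ → EuclideanSpace ℝ (Fin d) → A)
    (hastarmeas : ∀ n, Measurable (astar n))
    (hattain : ∀ n < N, ∀ x,
      V n x = f x (astar n x) + ∫ e, V (n + 1) (F x (astar n x) e) ∂ν)
    (x0 : EuclideanSpace ℝ (Fin d))
    (Xstar : ℕ → Ω → EuclideanSpace ℝ (Fin d))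
    (hX0 : ∀ ω, Xstar 0 ω = x0)
    (hXs : ∀ n ω, Xstar (n + 1) ω = F (Xstar n ω) (astar n (Xstar n ω)) (ε (n + 1) ω)) :
    (∫ ω, (∑ n ∈ Finset.range N, f (Xstar n ω) (astar n (Xstar n ω))) + g (Xstar N ω) ∂μ)
      = V 0 x0 := by
  -- measurability and bound of V n (for n ≤ N, via k = N - n)
  have hVb : ∀ k n, n + k = N → Measurable (V n) ∧ ∀ x, |V n x| ≤ Mg + k * Mf := by
    intro k
    induction k with
    | zero =>
      intro n hn
      have hn' : n = N := by omega
      subst hn'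
      have hVg : V n = g := funext hVN
      exact ⟨hVg ▸ hgmeas, fun x => by simpa [hVg] using hgbdd x⟩
    | succ k ih =>
      intro n hn
      have hnN : n < N := by omega
      have ihn := ih (n + 1) (by omega)
      have hHmeas : Measurable fun p : EuclideanSpace ℝ (Fin d) × Enoise => V (n + 1) (F p.1 (astar n p.1) p.2) :=
        ihn.1.comp (hFmeas.comp ((measurable_fst).prodMk
          (((hastarmeas n).comp measurable_fst).prodMk measurable_snd)))
      have hintmeas : Measurable fun x : EuclideanSpace ℝ (Fin d) => ∫ e, V (n + 1) (F x (astar n x) e) ∂ν :=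
        (StronglyMeasurable.integral_prod_right'
          (f := fun p : EuclideanSpace ℝ (Fin d) × Enoise => V (n + 1) (F p.1 (astar n p.1) p.2))
          hHmeas.stronglyMeasurable).measurable
      have hVeq : V n = fun x => f x (astar n x) + ∫ e, V (n + 1) (F x (astar n x) e) ∂ν :=
        funext (hattain n hnN)
      constructor
      · rw [hVeq]
        exact (hfmeas.comp (measurable_id.prodMk (hastarmeas n))).add hintmeas
      · intro x
        rw [hVeq]
        have hibd : |∫ e, V (n + 1) (F x (astar n x) e) ∂ν| ≤ Mg + k * Mf := by
          have := norm_integral_le_of_norm_le_const (μ := ν)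
            (f := fun e => V (n + 1) (F x (astar n x) e)) (C := Mg + k * Mf)
            (Filter.Eventually.of_forall fun e => by simpa using ihn.2 _)
          simpa using this
        calc |f x (astar n x) + ∫ e, V (n + 1) (F x (astar n x) e) ∂ν|
            ≤ |f x (astar n x)| + |∫ e, V (n + 1) (F x (astar n x) e) ∂ν| := abs_add_le _ _
          _ ≤ Mf + (Mg + k * Mf) := add_le_add (hfbdd _ _) hibd
          _ = Mg + (k + 1 : ℕ) * Mf := by push_cast; ring
  -- representation of Xstar via PhiDP
  have hXrep : ∀ n ω, Xstar n ω = PhiDP x0 F astar n (fun i : Fin n => ε (i + 1) ω) := by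
    intro n
    induction n with
    | zero => intro ω; simpa [PhiDP] using hX0 ω
    | succ n ih =>
      intro ω
      rw [hXs n ω, ih ω]
      simp only [PhiDP, Fin.val_last]
      congr 2 <;> funext i <;> simp [Fin.coe_castSucc]
  have hXmeas : ∀ n, Measurable (Xstar n) := by
    intro n
    have : Xstar n = (PhiDP x0 F astar n) ∘ fun ω => fun i : Fin n => ε (i + 1) ω :=
      funext fun ω => hXrep n ω
    rw [this]
    exact (PhiDP_measurable x0 F astar hFmeas hastarmeas n).comp
      (measurable_pi_lambda _ fun i => hεmeas _)
  have hXind : ∀ n, ProbabilityTheory.IndepFun (Xstar n) (ε (n + 1)) μ := by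
    intro n
    have h := (eps_vec_indep μ ε hεmeas hindep n).comp
      ((PhiDP_measurable x0 F astar hFmeas hastarmeas n)) measurable_id
    have heq : (PhiDP x0 F astar n) ∘ (fun ω => fun i : Fin n => ε (i + 1) ω) = Xstar n :=
      funext fun ω => (hXrep n ω).symm
    rw [heq] at h
    exact h
  -- integrability helper
  have intOf : ∀ (h : Ω → ℝ), Measurable h → ∀ C : ℝ, (∀ ω, |h ω| ≤ C) → Integrable h μ := by
    intro h hm C hb
    exact (integrable_const C).mono' hm.aestronglyMeasurable
      (Filter.Eventually.of_forall fun ω => by simpa using hb ω)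
  -- main induction
  have key : ∀ n ≤ N, (∫ ω, (∑ k ∈ Finset.range n, f (Xstar k ω) (astar k (Xstar k ω)))
      + V n (Xstar n ω) ∂μ) = V 0 x0 := by
    intro n
    induction n with
    | zero =>
      intro _
      simp only [Finset.range_zero, Finset.sum_empty, hX0, zero_add]
      simp
    | succ n ihn =>
      intro hn
      have hnN : n < N := by omega
      have hVn1 := hVb (N - (n + 1)) (n + 1) (by omega)
      set C : ℝ := Mg + (N - (n + 1) : ℕ) * Mf with hC
      -- integrand pieces
      have hSmeas : Measurable fun ω => ∑ k ∈ Finset.range n,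
          f (Xstar k ω) (astar k (Xstar k ω)) := by
        apply Finset.measurable_sum
        intro k _
        exact hfmeas.comp ((hXmeas k).prodMk ((hastarmeas k).comp (hXmeas k)))
      have hfnmeas : Measurable fun ω => f (Xstar n ω) (astar n (Xstar n ω)) :=
        hfmeas.comp ((hXmeas n).prodMk ((hastarmeas n).comp (hXmeas n)))
      have hSfint : Integrable (fun ω => (∑ k ∈ Finset.range n,
          f (Xstar k ω) (astar k (Xstar k ω))) + f (Xstar n ω) (astar n (Xstar n ω))) μ := by
        refine intOf _ (hSmeas.add hfnmeas) (n * Mf + Mf) fun ω => ?_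
        refine (abs_add_le _ _).trans (add_le_add ?_ (hfbdd _ _))
        calc |∑ k ∈ Finset.range n, f (Xstar k ω) (astar k (Xstar k ω))|
            ≤ ∑ k ∈ Finset.range n, |f (Xstar k ω) (astar k (Xstar k ω))| :=
              Finset.abs_sum_le_sum_abs _ _
          _ ≤ ∑ _k ∈ Finset.range n, Mf := Finset.sum_le_sum fun k _ => hfbdd _ _
          _ = n * Mf := by simp [mul_comm]
      have hVXint : Integrable (fun ω => V (n + 1) (Xstar (n + 1) ω)) μ :=
        intOf _ (hVn1.1.comp (hXmeas (n + 1))) C fun ω => hVn1.2 _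
      -- the conditioning step
      have hHmeas : Measurable fun p : EuclideanSpace ℝ (Fin d) × Enoise => V (n + 1) (F p.1 (astar n p.1) p.2) :=
        hVn1.1.comp (hFmeas.comp ((measurable_fst).prodMk
          (((hastarmeas n).comp measurable_fst).prodMk measurable_snd)))
      have hcond : ∫ ω, V (n + 1) (Xstar (n + 1) ω) ∂μ
          = ∫ ω, ∫ e, V (n + 1) (F (Xstar n ω) (astar n (Xstar n ω)) e) ∂ν ∂μ := by
        have := indep_integral_eq μ ν (Xstar n) (ε (n + 1)) (hXmeas n) (hεmeas (n + 1))
          (hXind n) (hident (n + 1))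
          (fun x e => V (n + 1) (F x (astar n x) e)) hHmeas C (fun x e => hVn1.2 _)
        simpa only [← hXs] using this
      have hGmeas : Measurable fun ω =>
          ∫ e, V (n + 1) (F (Xstar n ω) (astar n (Xstar n ω)) e) ∂ν := by
        exact ((StronglyMeasurable.integral_prod_right'
          (f := fun p : EuclideanSpace ℝ (Fin d) × Enoise => V (n + 1) (F p.1 (astar n p.1) p.2))
          hHmeas.stronglyMeasurable).measurable).comp (hXmeas n)
      have hGbd : ∀ ω, |∫ e, V (n + 1) (F (Xstar n ω) (astar n (Xstar n ω)) e) ∂ν| ≤ C := by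
        intro ω
        have := norm_integral_le_of_norm_le_const (μ := ν)
          (f := fun e => V (n + 1) (F (Xstar n ω) (astar n (Xstar n ω)) e)) (C := C)
          (Filter.Eventually.of_forall fun e => by simpa using hVn1.2 _)
        simpa using this
      have hGint : Integrable (fun ω =>
          ∫ e, V (n + 1) (F (Xstar n ω) (astar n (Xstar n ω)) e) ∂ν) μ :=
        intOf _ hGmeas C hGbd
      calc (∫ ω, (∑ k ∈ Finset.range (n + 1), f (Xstar k ω) (astar k (Xstar k ω)))
              + V (n + 1) (Xstar (n + 1) ω) ∂μ)
          = (∫ ω, ((∑ k ∈ Finset.range n, f (Xstar k ω) (astar k (Xstar k ω)))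
              + f (Xstar n ω) (astar n (Xstar n ω))) + V (n + 1) (Xstar (n + 1) ω) ∂μ) := by
            simp [Finset.sum_range_succ]
        _ = (∫ ω, (∑ k ∈ Finset.range n, f (Xstar k ω) (astar k (Xstar k ω)))
              + f (Xstar n ω) (astar n (Xstar n ω)) ∂μ)
              + ∫ ω, V (n + 1) (Xstar (n + 1) ω) ∂μ := integral_add hSfint hVXint
        _ = (∫ ω, (∑ k ∈ Finset.range n, f (Xstar k ω) (astar k (Xstar k ω)))
              + f (Xstar n ω) (astar n (Xstar n ω)) ∂μ)
              + ∫ ω, ∫ e, V (n + 1) (F (Xstar n ω) (astar n (Xstar n ω)) e) ∂ν ∂μ := by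
            rw [hcond]
        _ = ∫ ω, ((∑ k ∈ Finset.range n, f (Xstar k ω) (astar k (Xstar k ω)))
              + f (Xstar n ω) (astar n (Xstar n ω)))
              + ∫ e, V (n + 1) (F (Xstar n ω) (astar n (Xstar n ω)) e) ∂ν ∂μ :=
            (integral_add hSfint hGint).symm
        _ = ∫ ω, (∑ k ∈ Finset.range n, f (Xstar k ω) (astar k (Xstar k ω)))
              + V n (Xstar n ω) ∂μ := by
            refine integral_congr_ae (Filter.Eventually.of_forall fun ω => ?_)
            dsimp only
            rw [hattain n hnN (Xstar n ω)]
            ring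
        _ = V 0 x0 := ihn (by omega)
  have h := key N le_rfl
  simpa only [hVN] using h
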